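/- Let B1 and B2 be unital C*-subalgebras of M_N and B a unital C*-subalgebra of B1. For every unitary u in the norm closure of Z(B1,B2;[B]) in U(M_N), there exists a unitary v in B1 such that vBv* ⊆ uB2u* ∩ B1. Consequently, the closure of Z(B1,B2;[B]) is contained in the union of the sets Z(B1,B2;[C]) over all unital C*-subalgebras C of B1 with [C] ≥ [B]. -/

import Mathlib

open scoped Matrix.Norms.L2Operator

set_option synthInstance.maxHeartbeats 1000000
set_option maxHeartbeats 1000000

noncomputable section

abbrev MatN (N : ℕ) := Matrix (Fin N) (Fin N) ℂ

/-- The perturbation `u S u*` of a set of matrices by a unitary. -/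
def conjSet {N : ℕ} (u : MatN N) (S : Set (MatN N)) : Set (MatN N) :=
  (fun x => u * x * star u) '' S

/-- `B ∼_{B1} C`: the subalgebras `B` and `C` are conjugate by a unitary of `B1`. -/
def equivIn {N : ℕ} (B1 : StarSubalgebra ℂ (MatN N)) (B C : StarSubalgebra ℂ (MatN N)) : Prop :=
  ∃ v : MatN N, v ∈ unitary (MatN N) ∧ v ∈ B1 ∧
    conjSet v (B : Set (MatN N)) = (C : Set (MatN N))

/-- `Z(B1,B2;[B]) = { u ∈ U(M_N) : u B2 u* ∩ B1 ∼_{B1} B }`. -/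
def Zset {N : ℕ} (B1 B2 B : StarSubalgebra ℂ (MatN N)) : Set (MatN N) :=
  {u | u ∈ unitary (MatN N) ∧ ∃ v : MatN N, v ∈ unitary (MatN N) ∧ v ∈ B1 ∧
    conjSet v (B : Set (MatN N)) = conjSet u (B2 : Set (MatN N)) ∩ (B1 : Set (MatN N))}

/-- Conjugation by a unitary as a star algebra homomorphism. -/
def conjHom {N : ℕ} (u : MatN N) (hu : u ∈ unitary (MatN N)) : MatN N →⋆ₐ[ℂ] MatN N where
  toFun x := u * x * star u
  map_one' := by simpa using (Unitary.mem_iff.mp hu).2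
  map_mul' x y := by
    have h : ∀ z : MatN N, star u * (u * z) = z := fun z => by
      rw [← mul_assoc, (Unitary.mem_iff.mp hu).1, one_mul]
    simp only [mul_assoc, h]
  map_zero' := by simp
  map_add' x y := by
    simp [mul_add, add_mul]
  commutes' r := by
    simp [Algebra.algebraMap_eq_smul_one, mul_smul_comm, smul_mul_assoc,
      (Unitary.mem_iff.mp hu).2]
  map_star' x := by
    simp [star_mul, mul_assoc]

/-- For every unitary `u` in the closure of `Z(B1,B2;[B])` there is a unitary `v ∈ B1` with
`v B v* ⊆ u B2 u* ∩ B1`; consequently the closure of `Z(B1,B2;[B])` is contained in the union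
of the `Z(B1,B2;[C])` over the classes `[C] ≥ [B]`. -/
theorem closure_Z_subset_union (N : ℕ) (hN : 0 < N)
    (B1 B2 : StarSubalgebra ℂ (MatN N))
    (B : StarSubalgebra ℂ (MatN N)) (hB : B ≤ B1) :
    (∀ u : MatN N, u ∈ unitary (MatN N) → u ∈ closure (Zset B1 B2 B) →
      ∃ v : MatN N, v ∈ unitary (MatN N) ∧ v ∈ B1 ∧
        conjSet v (B : Set (MatN N)) ⊆
          conjSet u (B2 : Set (MatN N)) ∩ (B1 : Set (MatN N))) ∧
    closure (Zset B1 B2 B) ⊆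
      ⋃ (C : StarSubalgebra ℂ (MatN N)) (_ : C ≤ B1)
        (_ : ∃ D : StarSubalgebra ℂ (MatN N), D ≤ C ∧ equivIn B1 D B),
        Zset B1 B2 C := by
  haveI : Nonempty (Fin N) := ⟨⟨0, hN⟩⟩
  have hB1closed : IsClosed (B1 : Set (MatN N)) :=
    Submodule.closed_of_finiteDimensional (Subalgebra.toSubmodule B1.toSubalgebra)
  have hB2closed : IsClosed (B2 : Set (MatN N)) :=
    Submodule.closed_of_finiteDimensional (Subalgebra.toSubmodule B2.toSubalgebra)
  have key : ∀ u : MatN N, u ∈ unitary (MatN N) → u ∈ closure (Zset B1 B2 B) →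
      ∃ v : MatN N, v ∈ unitary (MatN N) ∧ v ∈ B1 ∧
        conjSet v (B : Set (MatN N)) ⊆
          conjSet u (B2 : Set (MatN N)) ∩ (B1 : Set (MatN N)) := by
    intro u hu hcl
    obtain ⟨f, hfZ, hfu⟩ := mem_closure_iff_seq_limit.mp hcl
    have hfU : ∀ n, f n ∈ unitary (MatN N) := fun n => (hfZ n).1
    choose w hwU hwB1 hwEq using fun n => (hfZ n).2
    have hwball : ∀ n, w n ∈ Metric.closedBall (0 : MatN N) 1 := fun n => by
      simp [Metric.mem_closedBall, dist_zero_right,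
        CStarRing.norm_of_mem_unitary (hwU n)]
    obtain ⟨v, hvball, φ, hφ, hvlim⟩ :=
      (isCompact_closedBall (0 : MatN N) 1).tendsto_subseq hwball
    have hflim : Filter.Tendsto (fun n => f (φ n)) Filter.atTop (nhds u) :=
      hfu.comp hφ.tendsto_atTop
    have hvstar : Filter.Tendsto (fun n => star (w (φ n))) Filter.atTop (nhds (star v)) :=
      hvlim.star
    have hfstar : Filter.Tendsto (fun n => star (f (φ n))) Filter.atTop (nhds (star u)) :=
      hflim.star
    have hvU : v ∈ unitary (MatN N) := by
      rw [Unitary.mem_iff]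
      constructor
      · have h1 : Filter.Tendsto (fun n => star (w (φ n)) * w (φ n)) Filter.atTop
            (nhds (star v * v)) := hvstar.mul hvlim
        have h2 : (fun n => star (w (φ n)) * w (φ n)) = fun _ => (1 : MatN N) :=
          funext fun n => (Unitary.mem_iff.mp (hwU (φ n))).1
        rw [h2] at h1
        exact (tendsto_nhds_unique h1 tendsto_const_nhds)
      · have h1 : Filter.Tendsto (fun n => w (φ n) * star (w (φ n))) Filter.atTop
            (nhds (v * star v)) := hvlim.mul hvstar
        have h2 : (fun n => w (φ n) * star (w (φ n))) = fun _ => (1 : MatN N) :=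
          funext fun n => (Unitary.mem_iff.mp (hwU (φ n))).2
        rw [h2] at h1
        exact (tendsto_nhds_unique h1 tendsto_const_nhds)
    have hvB1 : v ∈ B1 :=
      hB1closed.mem_of_tendsto hvlim (Filter.Eventually.of_forall fun n => hwB1 (φ n))
    refine ⟨v, hvU, hvB1, ?_⟩
    rintro x ⟨b, hb, rfl⟩
    -- x = v * b * star v
    have hmem : ∀ n, w (φ n) * b * star (w (φ n)) ∈
        conjSet (f (φ n)) (B2 : Set (MatN N)) ∩ (B1 : Set (MatN N)) := by
      intro n
      rw [← hwEq (φ n)]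
      exact ⟨b, hb, rfl⟩
    choose c hc hceq using fun n => (hmem n).1
    have hxlim : Filter.Tendsto (fun n => w (φ n) * b * star (w (φ n))) Filter.atTop
        (nhds (v * b * star v)) := (hvlim.mul tendsto_const_nhds).mul hvstar
    have hclim : Filter.Tendsto c Filter.atTop
        (nhds (star u * (v * b * star v) * u)) := by
      have h1 : Filter.Tendsto
          (fun n => star (f (φ n)) * (w (φ n) * b * star (w (φ n))) * f (φ n))
          Filter.atTop (nhds (star u * (v * b * star v) * u)) :=
        (hfstar.mul hxlim).mul hflim
      have h2 : (fun n => star (f (φ n)) * (w (φ n) * b * star (w (φ n))) * f (φ n)) = c := by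
        funext n
        rw [← hceq n]
        have hfn := Unitary.mem_iff.mp (hfU (φ n))
        calc star (f (φ n)) * (f (φ n) * c n * star (f (φ n))) * f (φ n)
            = (star (f (φ n)) * f (φ n)) * c n * (star (f (φ n)) * f (φ n)) := by
              simp only [mul_assoc]
          _ = c n := by rw [hfn.1, one_mul, mul_one]
      rwa [h2] at h1
    have hcB2 : star u * (v * b * star v) * u ∈ (B2 : Set (MatN N)) :=
      hB2closed.mem_of_tendsto hclim (Filter.Eventually.of_forall fun n => hc n)
    have hxB1 : v * b * star v ∈ (B1 : Set (MatN N)) :=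
      hB1closed.mem_of_tendsto hxlim (Filter.Eventually.of_forall fun n => (hmem n).2)
    refine ⟨⟨star u * (v * b * star v) * u, hcB2, ?_⟩, hxB1⟩
    have hu' := Unitary.mem_iff.mp hu
    calc u * (star u * (v * b * star v) * u) * star u
        = (u * star u) * (v * b * star v) * (u * star u) := by simp only [mul_assoc]
      _ = v * b * star v := by rw [hu'.2, one_mul, mul_one]
  refine ⟨key, ?_⟩
  intro u hucl
  have hUclosed : IsClosed (unitary (MatN N) : Set (MatN N)) := by
    have hset : (unitary (MatN N) : Set (MatN N)) =
        {x : MatN N | star x * x = 1} ∩ {x : MatN N | x * star x = 1} := by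
      ext x
      simp [Unitary.mem_iff, Set.mem_inter_iff, Set.mem_setOf_eq]
    rw [hset]
    exact (isClosed_eq (continuous_star.mul continuous_id) continuous_const).inter
      (isClosed_eq (continuous_id.mul continuous_star) continuous_const)
  have huU : u ∈ unitary (MatN N) := by
    have h := closure_mono (show Zset B1 B2 B ⊆ (unitary (MatN N) : Set (MatN N)) from
      fun x hx => hx.1) hucl
    rwa [hUclosed.closure_eq] at h
  obtain ⟨v, hvU, hvB1, hsub⟩ := key u huU hucl
  -- C = u B2 u* ∩ B1
  set C : StarSubalgebra ℂ (MatN N) := (B2.map (conjHom u huU)) ⊓ B1 with hC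
  have hCset : (C : Set (MatN N)) =
      conjSet u (B2 : Set (MatN N)) ∩ (B1 : Set (MatN N)) := rfl
  refine Set.mem_iUnion.mpr ⟨C, Set.mem_iUnion.mpr ⟨inf_le_right, Set.mem_iUnion.mpr ⟨?_, ?_⟩⟩⟩
  · -- D ≤ C and equivIn B1 D B
    refine ⟨B.map (conjHom v hvU), ?_, ?_⟩
    · intro x hx
      have hx' : x ∈ conjSet v (B : Set (MatN N)) := hx
      have := hsub hx'
      rw [← hCset] at this
      exact this
    · refine ⟨star v, Unitary.star_mem hvU, star_mem hvB1, ?_⟩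
      have : (B.map (conjHom v hvU) : Set (MatN N)) = conjSet v (B : Set (MatN N)) := rfl
      rw [this]
      show (fun x => star v * x * star (star v)) '' ((fun x => v * x * star v) '' _) = _
      rw [← Set.image_comp]
      have hv' := Unitary.mem_iff.mp hvU
      have hfun : ((fun x => star v * x * star (star v)) ∘ (fun x => v * x * star v)) = id := by
        funext x
        simp only [Function.comp_apply, star_star, id_eq]
        calc star v * (v * x * star v) * v
            = (star v * v) * x * (star v * v) := by simp only [mul_assoc]
          _ = x := by rw [hv'.1, one_mul, mul_one]
      rw [hfun, Set.image_id]
  · -- u ∈ Zset B1 B2 C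
    refine ⟨huU, 1, Submonoid.one_mem (unitary (MatN N)), one_mem B1, ?_⟩
    rw [hCset]
    show (fun x => 1 * x * star 1) '' _ = _
    simp [star_one]
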